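/- Suppose L = 2 and f is a twice continuously differentiable positive probability density on ℝ with f'(x) → 0 and f'(x)f''(x)/f(x) → 0 as x → ±∞, and f'' not identically zero, with the relevant integrals finite. Then C_{B,2} := 2κ₂ ∫ (f'(x)f'''(x)/f(x) − f'(x)²f''(x)/f(x)²) dx = −2κ₂ ∫ f''(x)²/f(x) dx < 0 for any κ₂ > 0. Consequently the optimal tempering parameter w* = 1 − (C_{B,2}/(2C_{B,1}))(h*)² satisfies w* > 1 whenever h* > 0 and C_{B,1} > 0. -/

import Mathlib

open MeasureTheory Filter

/-- For `L = 2`, the cross coefficient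
`C_{B,2} = 2κ₂ ∫ (f'f'''/f - f'²f''/f²) dx = -2κ₂ ∫ f''²/f dx < 0`,
hence the optimal tempering parameter `w* = 1 - (C_{B,2}/(2C_{B,1}))(h*)²`
satisfies `w* > 1`. -/
theorem stmt5
    (f : ℝ → ℝ) (hfpos : ∀ x, 0 < f x) (hf : ContDiff ℝ 3 f)
    (hdens : ∫ x, f x = 1)
    (hd1 : Tendsto (fun x => deriv f x) atTop (nhds 0))
    (hd1' : Tendsto (fun x => deriv f x) atBot (nhds 0))
    (hd2 : Tendsto (fun x => deriv f x * iteratedDeriv 2 f x / f x) atTop (nhds 0))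
    (hd2' : Tendsto (fun x => deriv f x * iteratedDeriv 2 f x / f x) atBot (nhds 0))
    (hne : ∃ x, iteratedDeriv 2 f x ≠ 0)
    (hint1 : Integrable (fun x =>
      deriv f x * iteratedDeriv 3 f x / f x
        - (deriv f x) ^ 2 * iteratedDeriv 2 f x / (f x) ^ 2))
    (hint2 : Integrable (fun x => (iteratedDeriv 2 f x) ^ 2 / f x))
    (κ : ℝ) (hκ : 0 < κ)
    (CB2 : ℝ)
    (hCB2 : CB2 = 2 * κ * ∫ x,
      (deriv f x * iteratedDeriv 3 f x / f x
        - (deriv f x) ^ 2 * iteratedDeriv 2 f x / (f x) ^ 2))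
    (CB1 hstar : ℝ) (hCB1 : 0 < CB1) (hhstar : 0 < hstar)
    (wstar : ℝ) (hwstar : wstar = 1 - CB2 / (2 * CB1) * hstar ^ 2) :
    CB2 = -2 * κ * ∫ x, (iteratedDeriv 2 f x) ^ 2 / f x ∧
      CB2 < 0 ∧ 1 < wstar := by
  have hfne : ∀ x, f x ≠ 0 := fun x => (hfpos x).ne'
  -- g = f' f'' / f
  set g : ℝ → ℝ := fun x => deriv f x * iteratedDeriv 2 f x / f x with hg
  set g' : ℝ → ℝ := fun x =>
      (deriv f x * iteratedDeriv 3 f x / f x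
        - (deriv f x) ^ 2 * iteratedDeriv 2 f x / (f x) ^ 2)
      + (iteratedDeriv 2 f x) ^ 2 / f x with hg'
  have hderivf : ∀ x, HasDerivAt f (deriv f x) x :=
    fun x => (hf.differentiable (by norm_num)).differentiableAt.hasDerivAt
  have hf1 : ContDiff ℝ 2 (deriv f) := by
    exact (contDiff_succ_iff_deriv.mp (show ContDiff ℝ (2+1) f from hf)).2.2
  have hderivf1 : ∀ x, HasDerivAt (deriv f) (iteratedDeriv 2 f x) x := by
    intro x
    have : iteratedDeriv 2 f x = deriv (deriv f) x := by
      simp [iteratedDeriv_succ, iteratedDeriv_one]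
    rw [this]
    exact (hf1.differentiable (by norm_num)).differentiableAt.hasDerivAt
  have hf2 : ContDiff ℝ 1 (iteratedDeriv 2 f) := by
    rw [show (2:ℕ) = 1+1 from rfl, iteratedDeriv_succ', iteratedDeriv_one]
    exact (contDiff_succ_iff_deriv.mp
      ((contDiff_succ_iff_deriv.mp (show ContDiff ℝ (2+1) f from hf)).2.2)).2.2
  have hderivf2 : ∀ x, HasDerivAt (iteratedDeriv 2 f) (iteratedDeriv 3 f x) x := by
    intro x
    have : iteratedDeriv 3 f x = deriv (iteratedDeriv 2 f) x := by
      rw [show (3:ℕ) = 2+1 from rfl, iteratedDeriv_succ]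
    rw [this]
    exact (hf2.differentiable one_ne_zero).differentiableAt.hasDerivAt
  have hgderiv : ∀ x, HasDerivAt g (g' x) x := by
    intro x
    have h := (((hderivf1 x).mul (hderivf2 x)).div (hderivf x) (hfne x))
    refine h.congr_deriv ?_
    rw [hg', Pi.mul_apply]
    field_simp [hfne x]
    ring
  have hintg' : Integrable g' := hint1.add hint2
  have hzero : (∫ x, g' x) = 0 := by
    have := integral_of_hasDerivAt_of_tendsto hgderiv hintg' hd2' hd2
    simpa using this
  have hsplit : (∫ x, g' x)
      = (∫ x, (deriv f x * iteratedDeriv 3 f x / f x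
          - (deriv f x) ^ 2 * iteratedDeriv 2 f x / (f x) ^ 2))
        + ∫ x, (iteratedDeriv 2 f x) ^ 2 / f x :=
    integral_add hint1 hint2
  have hkey : (∫ x, (deriv f x * iteratedDeriv 3 f x / f x
        - (deriv f x) ^ 2 * iteratedDeriv 2 f x / (f x) ^ 2))
      = - ∫ x, (iteratedDeriv 2 f x) ^ 2 / f x := by
    linarith [hsplit, hzero]
  have heq : CB2 = -2 * κ * ∫ x, (iteratedDeriv 2 f x) ^ 2 / f x := by
    rw [hCB2, hkey]; ring
  -- positivity of ∫ f''²/f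
  have hnonneg : 0 ≤ fun x => (iteratedDeriv 2 f x) ^ 2 / f x := fun x =>
    div_nonneg (sq_nonneg _) (hfpos x).le
  have hpos : 0 < ∫ x, (iteratedDeriv 2 f x) ^ 2 / f x := by
    rw [integral_pos_iff_support_of_nonneg hnonneg hint2]
    obtain ⟨x₀, hx₀⟩ := hne
    have hcont : Continuous fun x => (iteratedDeriv 2 f x) ^ 2 / f x :=
      ((hf2.continuous.pow 2)).div (hf.continuous) hfne
    have hx₀' : (iteratedDeriv 2 f x₀) ^ 2 / f x₀ > 0 :=
      div_pos (lt_of_le_of_ne (sq_nonneg _) (Ne.symm (pow_ne_zero 2 hx₀))) (hfpos x₀)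
    have : {x | (iteratedDeriv 2 f x) ^ 2 / f x > 0} ∈ nhds x₀ :=
      (hcont.continuousAt).preimage_mem_nhds (Ioi_mem_nhds hx₀')
    calc (0:ENNReal) < MeasureTheory.volume {x | (iteratedDeriv 2 f x) ^ 2 / f x > 0} := by
          exact MeasureTheory.Measure.measure_pos_of_mem_nhds _ this
      _ ≤ _ := by
          apply measure_mono
          intro x hx
          exact ne_of_gt hx
  have hCB2neg : CB2 < 0 := by
    rw [heq]
    nlinarith [mul_pos hκ hpos]
  refine ⟨heq, hCB2neg, ?_⟩
  rw [hwstar]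
  have h1 : CB2 / (2 * CB1) < 0 := div_neg_of_neg_of_pos hCB2neg (by linarith)
  have h2 : 0 < hstar ^ 2 := by positivity
  nlinarith [mul_pos (neg_pos.mpr h1) h2]
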